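/- arXiv:2509.25551 — 4 statements merged into one kernel-verified Lean document; each statement's English description precedes it below -/
import Mathlib

section
/- Let 2 ≤ d ≤ n be integers. In the polynomial ring ℂ[X₁,Y₁,…,X_n,Y_n], the following identity holds: Σ_{1≤i₁<⋯<i_d≤n} (X_{i₁} − X_{i₂} − ⋯ − X_{i_d})(Y_{i₁} − Y_{i₂} − ⋯ − Y_{i_d}) = C(n−1, d−1)·Σ_{i=1}^n X_i Y_i + Σ_{1≤i,j≤n, i≠j} ( C(n−2, d−2) − 2·C(n − min(i,j) − 1, d−2) )·X_i Y_j, where C(a,b) denotes the binomial coefficient. -/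
open MeasureTheory ProbabilityTheory Filter
open scoped ENNReal NNReal Topology BigOperators

noncomputable section

/-- A function `φ : S^d → ℝ` is antisymmetric if permuting its arguments multiplies it by
the sign of the permutation. -/
def Antisymmetric' {S : Type*} {d : ℕ} (φ : (Fin d → S) → ℝ) : Prop :=
  ∀ (x : Fin d → S) (π : Equiv.Perm (Fin d)), φ (x ∘ π) = (Equiv.Perm.sign π : ℤ) * φ x

open Classical in
/-- The φ-covariance of two vectors `u v : S^n`. -/
def covPhi {S : Type*} {d n : ℕ} (φ : (Fin d → S) → ℝ) (u v : Fin n → S) : ℝ :=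
  (n.choose d : ℝ)⁻¹ *
    ∑ f ∈ Finset.univ.filter (fun f : Fin d → Fin n => StrictMono f),
      φ (u ∘ f) * φ (v ∘ f)

/-- The φ-correlation of two vectors. -/
def corPhi {S : Type*} {d n : ℕ} (φ : (Fin d → S) → ℝ) (u v : Fin n → S) : ℝ :=
  covPhi φ u v / Real.sqrt (covPhi φ u u * covPhi φ v v)

/-- `phiBar φ μ x = E[φ(x, 𝒳₂, …, 𝒳_d)]` where `𝒳₂, …, 𝒳_d` are i.i.d. with law `μ`. -/
def phiBar {S : Type*} [MeasurableSpace S] {d : ℕ} (φ : (Fin d → S) → ℝ)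
    (μ : MeasureTheory.Measure S) (x : S) : ℝ :=
  ∫ y : Fin d → S, φ (fun j => if (j : ℕ) = 0 then x else y j) ∂(Measure.pi fun _ => μ)

/-- Squared Frobenius norm of a matrix. -/
def frobSq {p : ℕ} (M : Matrix (Fin p) (Fin p) ℝ) : ℝ :=
  ∑ k, ∑ l, (M k l) ^ 2

/-- Empirical spectral distribution of a (Hermitian) real matrix: the uniform probability
measure on its eigenvalues. (Junk value `0` if the matrix is not Hermitian.) -/
def ESD {p : ℕ} (M : Matrix (Fin p) (Fin p) ℝ) : MeasureTheory.Measure ℝ :=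
  if h : M.IsHermitian then
    (p : ℝ≥0∞)⁻¹ • ∑ i : Fin p, MeasureTheory.Measure.dirac (h.eigenvalues i)
  else 0

/-- The Marčenko–Pastur distribution with parameter `q ≥ 0`. -/
def MP (q : ℝ) : MeasureTheory.Measure ℝ :=
  if q = 0 then MeasureTheory.Measure.dirac 1
  else
    (MeasureTheory.volume.withDensity fun x =>
        ENNReal.ofReal
          (Set.indicator (Set.Icc ((1 - Real.sqrt q) ^ 2) ((1 + Real.sqrt q) ^ 2))
            (fun x =>
              Real.sqrt (((1 + Real.sqrt q) ^ 2 - x) * (x - (1 - Real.sqrt q) ^ 2)) /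
                (2 * Real.pi * q * x)) x))
      + (if 1 < q then ENNReal.ofReal (1 - q⁻¹) • MeasureTheory.Measure.dirac 0 else 0)

/-- `MPaff q α β` is the push-forward of `MP q` by `x ↦ α x + β`. -/
def MPaff (q α β : ℝ) : MeasureTheory.Measure ℝ :=
  (MP q).map (fun x => α * x + β)

/-- A sequence of random probability measures on ℝ (defined on varying probability spaces)
converges weakly in probability to a deterministic measure `ν`. -/
def TendstoWeaklyInProbability {Ω : ℕ → Type*} [∀ n, MeasurableSpace (Ω n)]
    (P : ∀ n, MeasureTheory.Measure (Ω n)) (μ : ∀ n, Ω n → MeasureTheory.Measure ℝ)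
    (ν : MeasureTheory.Measure ℝ) : Prop :=
  ∀ f : BoundedContinuousFunction ℝ ℝ, ∀ ε > (0 : ℝ),
    Tendsto (fun n => P n {ω | ε ≤ |(∫ x, f x ∂(μ n ω)) - ∫ x, f x ∂ν|}) atTop (𝓝 0)


section PolyAux

private def wgt {n : ℕ} (s : Finset (Fin n)) (i : Fin n) : ℂ :=
  if i ∈ s then (if ∀ x ∈ s, i ≤ x then 1 else -1) else 0

private theorem count_master {α : Type*} [DecidableEq α] (u t : Finset α) (htu : t ⊆ u)
    (m : ℕ) (hm : t.card ≤ m) :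
    ((u.powersetCard m).filter (fun s => t ⊆ s)).card
      = (u.card - t.card).choose (m - t.card) := by
  rw [← Finset.card_sdiff_of_subset htu, ← Finset.card_powersetCard]
  apply Finset.card_nbij' (fun s => s \ t) (fun s => s ∪ t)
  · intro s hs
    simp only [Finset.mem_coe] at hs ⊢
    simp only [Finset.mem_filter, Finset.mem_powersetCard] at hs
    rw [Finset.mem_powersetCard]
    exact ⟨Finset.sdiff_subset_sdiff hs.1.1 (Finset.Subset.refl t),
      by rw [Finset.card_sdiff_of_subset hs.2, hs.1.2]⟩
  · intro s hs
    simp only [Finset.mem_coe] at hs ⊢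
    rw [Finset.mem_powersetCard] at hs
    have hdisj : Disjoint s t := Finset.disjoint_of_subset_left hs.1 Finset.sdiff_disjoint
    simp only [Finset.mem_filter, Finset.mem_powersetCard]
    refine ⟨⟨Finset.union_subset (hs.1.trans Finset.sdiff_subset) htu, ?_⟩,
      Finset.subset_union_right⟩
    rw [Finset.card_union_of_disjoint hdisj, hs.2]
    omega
  · intro s hs
    simp only [Finset.mem_coe] at hs
    simp only [Finset.mem_filter] at hs
    exact Finset.sdiff_union_of_subset hs.2
  · intro s hs
    simp only [Finset.mem_coe] at hs
    rw [Finset.mem_powersetCard] at hs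
    have hdisj : Disjoint s t := Finset.disjoint_of_subset_left hs.1 Finset.sdiff_disjoint
    ext x
    simp only [Finset.mem_sdiff, Finset.mem_union]
    constructor
    · rintro ⟨h1 | h1, h2⟩
      · exact h1
      · exact absurd h1 h2
    · intro hx
      exact ⟨Or.inl hx, fun hxt => Finset.disjoint_left.mp hdisj hx hxt⟩

private theorem wgt_mul_lt {n : ℕ} {i i' : Fin n} (h : i < i') (s : Finset (Fin n)) :
    wgt s i * wgt s i' =
      (if i ∈ s ∧ i' ∈ s then (1 : ℂ) else 0)
        - 2 * (if (i ∈ s ∧ i' ∈ s) ∧ ∀ x ∈ s, i ≤ x then (1 : ℂ) else 0) := by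
  simp only [wgt]
  by_cases hi : i ∈ s
  · by_cases hi' : i' ∈ s
    · have h2 : ¬ ∀ x ∈ s, i' ≤ x := fun hc => absurd (hc i hi) (not_le.mpr h)
      rw [if_pos hi, if_pos hi', if_neg h2,
        if_pos (show i ∈ s ∧ i' ∈ s from ⟨hi, hi'⟩)]
      by_cases hall : ∀ x ∈ s, i ≤ x
      · rw [if_pos hall,
          if_pos (show (i ∈ s ∧ i' ∈ s) ∧ ∀ x ∈ s, i ≤ x from ⟨⟨hi, hi'⟩, hall⟩)]
        norm_num
      · rw [if_neg hall,
          if_neg (show ¬((i ∈ s ∧ i' ∈ s) ∧ ∀ x ∈ s, i ≤ x) from fun hc => hall hc.2)]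
        norm_num
    · rw [if_neg hi', if_neg (show ¬(i ∈ s ∧ i' ∈ s) from fun hc => hi' hc.2),
        if_neg (show ¬((i ∈ s ∧ i' ∈ s) ∧ ∀ x ∈ s, i ≤ x) from fun hc => hi' hc.1.2)]
      norm_num
  · rw [if_neg hi, if_neg (show ¬(i ∈ s ∧ i' ∈ s) from fun hc => hi hc.1),
      if_neg (show ¬((i ∈ s ∧ i' ∈ s) ∧ ∀ x ∈ s, i ≤ x) from fun hc => hi hc.1.1)]
    norm_num

private theorem key_count_lt {n d : ℕ} (hd : 2 ≤ d) (hdn : d ≤ n) {i i' : Fin n} (h : i < i') :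
    ∑ s ∈ Finset.powersetCard d (Finset.univ : Finset (Fin n)), wgt s i * wgt s i' =
      (((n - 2).choose (d - 2) : ℕ) : ℂ)
        - 2 * (((n - (i : ℕ) - 2).choose (d - 2) : ℕ) : ℂ) := by
  have h2 : ({i, i'} : Finset (Fin n)).card = 2 := by
    rw [Finset.card_insert_of_notMem (by simp [h.ne]), Finset.card_singleton]
  rw [Finset.sum_congr rfl (fun s _ => wgt_mul_lt h s), Finset.sum_sub_distrib,
    ← Finset.mul_sum, Finset.sum_boole, Finset.sum_boole]
  have hA : (Finset.filter (fun s => i ∈ s ∧ i' ∈ s)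
      (Finset.powersetCard d (Finset.univ : Finset (Fin n)))).card = (n - 2).choose (d - 2) := by
    rw [Finset.filter_congr (q := fun s => ({i, i'} : Finset (Fin n)) ⊆ s)
        (fun s _ => by simp [Finset.insert_subset_iff])]
    have := count_master Finset.univ {i, i'} (Finset.subset_univ _) d (by rw [h2]; exact hd)
    rwa [h2, Finset.card_univ, Fintype.card_fin] at this
  have hB : (Finset.filter (fun s => (i ∈ s ∧ i' ∈ s) ∧ ∀ x ∈ s, i ≤ x)
      (Finset.powersetCard d (Finset.univ : Finset (Fin n)))).card
      = (n - (i : ℕ) - 2).choose (d - 2) := by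
    have hset : Finset.filter (fun s => (i ∈ s ∧ i' ∈ s) ∧ ∀ x ∈ s, i ≤ x)
        (Finset.powersetCard d (Finset.univ : Finset (Fin n)))
        = Finset.filter (fun s => ({i, i'} : Finset (Fin n)) ⊆ s)
          (Finset.powersetCard d (Finset.Ici i)) := by
      have hmemiff : ∀ u : Finset (Fin n), ({i, i'} : Finset (Fin n)) ⊆ u ↔ (i ∈ u ∧ i' ∈ u) := by
        intro u; simp [Finset.insert_subset_iff]
      ext s
      simp only [Finset.mem_filter, Finset.mem_powersetCard]
      constructor
      · rintro ⟨⟨-, hc⟩, hmem, hall⟩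
        exact ⟨⟨fun x hx => Finset.mem_Ici.mpr (hall x hx), hc⟩, (hmemiff s).mpr hmem⟩
      · rintro ⟨⟨hsub, hc⟩, hts⟩
        exact ⟨⟨Finset.subset_univ s, hc⟩, (hmemiff s).mp hts,
          fun x hx => Finset.mem_Ici.mp (hsub hx)⟩
    rw [hset]
    have hsub : ({i, i'} : Finset (Fin n)) ⊆ Finset.Ici i := by
      intro x hx
      rw [Finset.mem_Ici]
      rcases Finset.mem_insert.mp hx with rfl | hx
      · exact le_rfl
      · rw [Finset.mem_singleton.mp hx]; exact h.le
    have := count_master (Finset.Ici i) {i, i'} hsub d (by rw [h2]; exact hd)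
    rwa [h2, Fin.card_Ici] at this
  rw [hA, hB]

open MvPolynomial in
private theorem expand_row {n d : ℕ} (hd : 2 ≤ d) {f : Fin d → Fin n} (hf : StrictMono f)
    (g : Fin n → MvPolynomial (Fin n ⊕ Fin n) ℂ) :
    (∑ j : Fin d, (if (j : ℕ) = 0 then (1 : MvPolynomial (Fin n ⊕ Fin n) ℂ) else -1) * g (f j))
      = ∑ i : Fin n, C (wgt (Finset.image f Finset.univ) i) * g i := by
  have h0 : (0 : ℕ) < d := by omega
  rw [← Finset.sum_subset (Finset.subset_univ (Finset.image f Finset.univ))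
      (fun i _ hi => by
        simp only [wgt, if_neg (fun hc => hi hc)]
        rw [map_zero, zero_mul])]
  rw [Finset.sum_image (fun a _ b _ hab => hf.injective hab)]
  apply Finset.sum_congr rfl
  intro j _
  congr 1
  have hmem : f j ∈ Finset.image f Finset.univ := Finset.mem_image_of_mem f (Finset.mem_univ j)
  simp only [wgt, if_pos hmem]
  by_cases hj : (j : ℕ) = 0
  · rw [if_pos hj, if_pos, map_one]
    intro x hx
    obtain ⟨k, -, rfl⟩ := Finset.mem_image.mp hx
    exact hf.monotone (by rw [Fin.le_def, hj]; exact Nat.zero_le _)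
  · rw [if_neg hj, if_neg, map_neg, map_one]
    intro hall
    have h1 : f j ≤ f ⟨0, h0⟩ :=
      hall _ (Finset.mem_image_of_mem f (Finset.mem_univ _))
    have h2 := hf.le_iff_le.mp h1
    rw [Fin.le_def] at h2
    exact hj (Nat.le_zero.mp h2)

end PolyAux


open MvPolynomial in
open Classical in
/-- the key polynomial identity, in `ℂ[X₁, Y₁, …, Xₙ, Yₙ]` (the `Xᵢ` are indexed
by `Sum.inl i` and the `Yᵢ` by `Sum.inr i`). -/
theorem polynomial_identity
    (n d : ℕ) (hd : 2 ≤ d) (hdn : d ≤ n) :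
    (∑ f ∈ Finset.univ.filter (fun f : Fin d → Fin n => StrictMono f),
        (∑ j : Fin d, (if (j : ℕ) = 0 then (1 : MvPolynomial (Fin n ⊕ Fin n) ℂ) else -1) *
            X (Sum.inl (f j))) *
        (∑ j : Fin d, (if (j : ℕ) = 0 then (1 : MvPolynomial (Fin n ⊕ Fin n) ℂ) else -1) *
            X (Sum.inr (f j))))
      = C (((n - 1).choose (d - 1) : ℂ)) * ∑ i : Fin n, X (Sum.inl i) * X (Sum.inr i)
        + ∑ ij ∈ Finset.univ.filter (fun ij : Fin n × Fin n => ij.1 ≠ ij.2),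
            C ((((n - 2).choose (d - 2) : ℕ) : ℂ)
                - 2 * (((n - min (ij.1 : ℕ) (ij.2 : ℕ) - 2).choose (d - 2) : ℕ) : ℂ))
              * X (Sum.inl ij.1) * X (Sum.inr ij.2) := by
  classical
  have key : ∀ i i' : Fin n,
      (∑ s ∈ Finset.powersetCard d (Finset.univ : Finset (Fin n)), wgt s i * wgt s i')
        = if i = i' then (((n - 1).choose (d - 1) : ℕ) : ℂ)
          else (((n - 2).choose (d - 2) : ℕ) : ℂ)
            - 2 * (((n - min (i : ℕ) (i' : ℕ) - 2).choose (d - 2) : ℕ) : ℂ) := by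
    intro i i'
    by_cases hii : i = i'
    · subst hii
      rw [if_pos rfl]
      have hrw : ∀ s ∈ Finset.powersetCard d (Finset.univ : Finset (Fin n)),
          wgt s i * wgt s i = if i ∈ s then (1 : ℂ) else 0 := by
        intro s _
        simp only [wgt]
        split_ifs <;> ring
      rw [Finset.sum_congr rfl hrw, Finset.sum_boole]
      have h1 : ({i} : Finset (Fin n)).card = 1 := Finset.card_singleton i
      have hcm := count_master Finset.univ {i} (Finset.subset_univ _) d (by omega)
      rw [h1, Finset.card_univ, Fintype.card_fin] at hcm
      rw [Finset.filter_congr (q := fun s => ({i} : Finset (Fin n)) ⊆ s)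
          (fun s _ => by simp), hcm]
    · rw [if_neg hii]
      rcases lt_or_gt_of_ne hii with hlt | hgt
      · rw [key_count_lt hd hdn hlt, min_eq_left (Nat.le_of_lt (Fin.lt_def.mp hlt))]
      · have hc : ∀ s ∈ Finset.powersetCard d (Finset.univ : Finset (Fin n)),
            wgt s i * wgt s i' = wgt s i' * wgt s i := fun s _ => mul_comm _ _
        rw [Finset.sum_congr rfl hc, key_count_lt hd hdn hgt,
          min_eq_right (Nat.le_of_lt (Fin.lt_def.mp hgt))]
  have step1 : (∑ f ∈ Finset.univ.filter (fun f : Fin d → Fin n => StrictMono f),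
        (∑ j : Fin d, (if (j : ℕ) = 0 then (1 : MvPolynomial (Fin n ⊕ Fin n) ℂ) else -1) *
            X (Sum.inl (f j))) *
        (∑ j : Fin d, (if (j : ℕ) = 0 then (1 : MvPolynomial (Fin n ⊕ Fin n) ℂ) else -1) *
            X (Sum.inr (f j))))
      = ∑ s ∈ Finset.powersetCard d (Finset.univ : Finset (Fin n)),
          (∑ i : Fin n, C (wgt s i) * X (Sum.inl i)) *
          (∑ i : Fin n, C (wgt s i) * X (Sum.inr i)) := by
    refine Finset.sum_bij' (fun f _ => Finset.image f Finset.univ)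
      (fun s hs => ⇑(s.orderEmbOfFin (Finset.mem_powersetCard.mp hs).2)) ?_ ?_ ?_ ?_ ?_
    · intro f hf
      rw [Finset.mem_powersetCard]
      exact ⟨Finset.subset_univ _, by
        rw [Finset.card_image_of_injective _ ((Finset.mem_filter.mp hf).2).injective,
          Finset.card_univ, Fintype.card_fin]⟩
    · intro s hs
      exact Finset.mem_filter.mpr ⟨Finset.mem_univ _, (s.orderEmbOfFin _).strictMono⟩
    · intro f hf
      exact (Finset.orderEmbOfFin_unique _
        (fun x => Finset.mem_image_of_mem f (Finset.mem_univ x))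
        (Finset.mem_filter.mp hf).2).symm
    · intro s hs
      apply Finset.coe_injective
      rw [Finset.coe_image, Finset.coe_univ, Set.image_univ, Finset.range_orderEmbOfFin]
    · intro f hf
      exact congrArg₂ (· * ·)
        (expand_row hd (Finset.mem_filter.mp hf).2 (fun i => X (Sum.inl i)))
        (expand_row hd (Finset.mem_filter.mp hf).2 (fun i => X (Sum.inr i)))
  have step2 : ∑ s ∈ Finset.powersetCard d (Finset.univ : Finset (Fin n)),
        (∑ i : Fin n, C (wgt s i) * X (Sum.inl i)) *
        (∑ i : Fin n, C (wgt s i) * X (Sum.inr i))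
      = ∑ i : Fin n, ∑ i' : Fin n,
          C (∑ s ∈ Finset.powersetCard d (Finset.univ : Finset (Fin n)), wgt s i * wgt s i')
            * (X (Sum.inl i) * X (Sum.inr i')) := by
    have hpt : ∀ s ∈ Finset.powersetCard d (Finset.univ : Finset (Fin n)),
        (∑ i : Fin n, C (wgt s i) * X (Sum.inl i)) *
          (∑ i : Fin n, C (wgt s i) * X (Sum.inr i))
        = ∑ i : Fin n, ∑ i' : Fin n,
            C (wgt s i * wgt s i') * (X (Sum.inl i) * X (Sum.inr i')) := by
      intro s _
      rw [Finset.sum_mul_sum]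
      refine Finset.sum_congr rfl fun i _ => Finset.sum_congr rfl fun i' _ => ?_
      rw [map_mul]
      ring
    rw [Finset.sum_congr rfl hpt]
    simp_rw [map_sum, Finset.sum_mul]
    conv_lhs => rw [Finset.sum_comm]
    exact Finset.sum_congr rfl fun i _ => Finset.sum_comm
  rw [step1, step2]
  have hkey' : (∑ i : Fin n, ∑ i' : Fin n,
        C (∑ s ∈ Finset.powersetCard d (Finset.univ : Finset (Fin n)), wgt s i * wgt s i')
          * (X (Sum.inl i) * X (Sum.inr i')))
      = ∑ i : Fin n, ∑ i' : Fin n,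
          (if i = i' then C (((n - 1).choose (d - 1) : ℕ) : ℂ)
            else C ((((n - 2).choose (d - 2) : ℕ) : ℂ)
              - 2 * (((n - min (i : ℕ) (i' : ℕ) - 2).choose (d - 2) : ℕ) : ℂ)))
            * (X (Sum.inl i) * X (Sum.inr i')) :=
    Finset.sum_congr rfl fun i _ => Finset.sum_congr rfl fun i' _ => by
      rw [key i i', apply_ite C]
  rw [hkey']
  simp_rw [ite_mul]
  rw [Finset.sum_congr rfl (fun i (_ : i ∈ Finset.univ) => Finset.sum_ite _ _),
    Finset.sum_add_distrib]
  refine congrArg₂ (· + ·) ?_ ?_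
  · rw [Finset.mul_sum]
    apply Finset.sum_congr rfl
    intro i _
    rw [Finset.filter_eq, if_pos (Finset.mem_univ i), Finset.sum_singleton]
  · refine ((Finset.sum_finset_product
      (Finset.univ.filter (fun ij : Fin n × Fin n => ij.1 ≠ ij.2)) Finset.univ
      (fun i => Finset.univ.filter (fun i' => ¬ i = i'))
      (fun p => by simp)
      (f := fun p : Fin n × Fin n =>
        C ((((n - 2).choose (d - 2) : ℕ) : ℂ)
            - 2 * (((n - min (p.1 : ℕ) (p.2 : ℕ) - 2).choose (d - 2) : ℕ) : ℂ))
          * (X (Sum.inl p.1) * X (Sum.inr p.2)))).symm).trans ?_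
    exact Finset.sum_congr rfl fun ij _ => (mul_assoc _ _ _).symm


end
end

section
/- Let M = [x_{k,t}] (1 ≤ k ≤ p, 1 ≤ t ≤ n) be a p×n random matrix whose entries are independent centered real random variables in L⁴ with E[x_{k,t}²] = 1 for all k, t. Then E[ ‖ (1/n) M Mᵀ − I_p ‖_F² ] ≤ (p/n)·( p + max_{k,t} E[x_{k,t}⁴] − 2 ). -/
open MeasureTheory ProbabilityTheory Filter
open scoped ENNReal NNReal Topology BigOperators

noncomputable section

/-- the expected squared Frobenius distance of the empirical covariance matrix
of a white noise to the identity. -/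
theorem white_noise_covariance_frobenius_le
    (pp n : ℕ) (hp : 0 < pp) (hn : 0 < n)
    (Ω : Type) [MeasurableSpace Ω] (P : Measure Ω) [IsProbabilityMeasure P]
    (x : Fin pp → Fin n → Ω → ℝ)
    (hmeas : ∀ k t, Measurable (x k t))
    (hindep : iIndepFun
      (fun (kt : Fin pp × Fin n) ω => x kt.1 kt.2 ω) P)
    (hL4 : ∀ k t, MemLp (x k t) 4 P)
    (hcent : ∀ k t, ∫ ω, x k t ω ∂P = 0)
    (hvar : ∀ k t, ∫ ω, (x k t ω) ^ 2 ∂P = 1) :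
    (∫ ω, frobSq ((n : ℝ)⁻¹ •
        (Matrix.of (fun k t => x k t ω) * Matrix.transpose (Matrix.of (fun k t => x k t ω))) - 1) ∂P)
      ≤ ((pp : ℝ) / n) *
          ((pp : ℝ) + (⨆ kt : Fin pp × Fin n, ∫ ω, (x kt.1 kt.2 ω) ^ 4 ∂P) - 2) := by
  classical
  have hq24 : (1:ℝ≥0∞)/2 = 1/4 + 1/4 := by
    rw [ENNReal.div_add_div_same]
    rw [show (4:ℝ≥0∞) = 2*2 by norm_num, ENNReal.div_eq_div_iff] <;> norm_num
  have hq12 : (1:ℝ≥0∞)/1 = 1/2 + 1/2 := by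
    rw [ENNReal.div_add_div_same, ENNReal.div_eq_div_iff] <;> norm_num
  have hmeasX : ∀ kt : Fin pp × Fin n, Measurable fun ω => x kt.1 kt.2 ω :=
    fun kt => hmeas kt.1 kt.2
  have hmul2 : ∀ (k l : Fin pp) (t s : Fin n),
      MemLp (fun ω => x k t ω * x l s ω) 2 P := by
    intro k l t s
    haveI : ENNReal.HolderTriple 4 4 2 := ⟨by simpa [one_div] using hq24.symm⟩
    have h := MemLp.smul (𝕜 := ℝ) (r := 2) (hL4 l s) (hL4 k t)
    exact h
  have hint2 : ∀ (k l : Fin pp) (t s : Fin n),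
      Integrable (fun ω => x k t ω * x l s ω) P :=
    fun k l t s => (hmul2 k l t s).integrable one_le_two
  have hint4 : ∀ (k l : Fin pp) (t s : Fin n),
      Integrable (fun ω => (x k t ω * x l t ω) * (x k s ω * x l s ω)) P := by
    intro k l t s
    haveI : ENNReal.HolderTriple 2 2 1 := ⟨by simpa [one_div] using hq12.symm⟩
    have h := MemLp.smul (𝕜 := ℝ) (r := 1) (hmul2 k l s s) (hmul2 k l t t)
    exact memLp_one_iff_integrable.mp h
  -- mean of a product at one time
  have Emean : ∀ (k l : Fin pp) (t : Fin n),
      ∫ ω, x k t ω * x l t ω ∂P = if k = l then 1 else 0 := by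
    intro k l t
    by_cases h : k = l
    · subst h
      rw [if_pos rfl]
      simpa [pow_two] using hvar k t
    · rw [if_neg h]
      have hne : ((k, t) : Fin pp × Fin n) ≠ (l, t) := by
        simp [Prod.ext_iff, h]
      have hind := hindep.indepFun hne
      have := hind.integral_mul_eq_mul_integral (hmeas k t).aestronglyMeasurable
        (hmeas l t).aestronglyMeasurable
      simpa [Pi.mul_apply, hcent k t, hcent l t] using this
  -- cross-time factorization
  have Ecross : ∀ (k l : Fin pp) (t s : Fin n), t ≠ s →
      ∫ ω, (x k t ω * x l t ω) * (x k s ω * x l s ω) ∂P = if k = l then 1 else 0 := by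
    intro k l t s hts
    have h1 : ((k, t) : Fin pp × Fin n) ≠ (k, s) := by simp [Prod.ext_iff, hts]
    have h2 : ((k, t) : Fin pp × Fin n) ≠ (l, s) := by simp [Prod.ext_iff, hts]
    have h3 : ((l, t) : Fin pp × Fin n) ≠ (k, s) := by simp [Prod.ext_iff, hts]
    have h4 : ((l, t) : Fin pp × Fin n) ≠ (l, s) := by simp [Prod.ext_iff, hts]
    have hind := hindep.indepFun_mul_mul hmeasX (k, t) (l, t) (k, s) (l, s) h1 h2 h3 h4
    have := hind.integral_mul_eq_mul_integral
      ((hmeas k t).mul (hmeas l t)).aestronglyMeasurable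
      ((hmeas k s).mul (hmeas l s)).aestronglyMeasurable
    have this' : ∫ ω, (x k t ω * x l t ω) * (x k s ω * x l s ω) ∂P
        = (∫ ω, x k t ω * x l t ω ∂P) * ∫ ω, x k s ω * x l s ω ∂P := this
    rw [this', Emean k l t, Emean k l s]
    by_cases h : k = l <;> simp [h]
  -- same-time second moment for distinct rows
  have Esq : ∀ (k l : Fin pp) (t : Fin n), k ≠ l →
      ∫ ω, (x k t ω * x l t ω) ^ 2 ∂P = 1 := by
    intro k l t hkl
    have hne : ((k, t) : Fin pp × Fin n) ≠ (l, t) := by simp [Prod.ext_iff, hkl]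
    have hind := hindep.indepFun_mul_mul hmeasX (k, t) (k, t) (l, t) (l, t) hne hne hne hne
    have := hind.integral_mul_eq_mul_integral
      ((hmeas k t).mul (hmeas k t)).aestronglyMeasurable
      ((hmeas l t).mul (hmeas l t)).aestronglyMeasurable
    have this' : ∫ ω, (x k t ω * x k t ω) * (x l t ω * x l t ω) ∂P
        = (∫ ω, x k t ω * x k t ω ∂P) * ∫ ω, x l t ω * x l t ω ∂P := this
    have e1 : ∫ ω, x k t ω * x k t ω ∂P = 1 := by simpa [pow_two] using hvar k t
    have e2 : ∫ ω, x l t ω * x l t ω ∂P = 1 := by simpa [pow_two] using hvar l t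
    calc ∫ ω, (x k t ω * x l t ω) ^ 2 ∂P
        = ∫ ω, (x k t ω * x k t ω) * (x l t ω * x l t ω) ∂P := by
          congr 1; funext ω; ring
      _ = 1 := by rw [this', e1, e2]; norm_num
  have hn0 : (n:ℝ) ≠ 0 := Nat.cast_ne_zero.mpr hn.ne'
  have hc : (n:ℝ) * (n:ℝ)⁻¹ = 1 := mul_inv_cancel₀ hn0
  set V : Fin pp → Fin pp → Fin n → ℝ := fun k l t => ∫ ω, (x k t ω * x l t ω) ^ 2 ∂P with hV
  set A : Fin pp → Fin pp → Ω → ℝ :=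
    fun k l ω => (n:ℝ)⁻¹ * (∑ t, x k t ω * x l t ω) - (if k = l then 1 else 0) with hA
  have hAmem : ∀ k l, MemLp (A k l) 2 P := by
    intro k l
    have hsumm : MemLp (fun ω => ∑ t, x k t ω * x l t ω) 2 P :=
      memLp_finsetSum Finset.univ (fun t _ => hmul2 k l t t)
    exact (hsumm.const_mul _).sub (memLp_const _)
  have hIntA : ∀ k l, Integrable (fun ω => (A k l ω) ^ 2) P :=
    fun k l => (hAmem k l).integrable_sq
  have key : ∀ k l : Fin pp, ∫ ω, (A k l ω) ^ 2 ∂P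
      = (n:ℝ)⁻¹ * (n:ℝ)⁻¹ * (∑ t, V k l t) - (n:ℝ)⁻¹ * (if k = l then 1 else 0) := by
    intro k l
    set δ : ℝ := if k = l then 1 else 0 with hδdef
    have hδ : δ * δ = δ := by by_cases h : k = l <;> simp [hδdef, h]
    have hpw : ∀ ω, (A k l ω) ^ 2
        = (∑ t, ∑ s, (x k t ω * x l t ω) * (x k s ω * x l s ω)) * ((n:ℝ)⁻¹ * (n:ℝ)⁻¹)
          - (2 * (n:ℝ)⁻¹ * δ) * (∑ t, x k t ω * x l t ω) + δ * δ := by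
      intro ω
      rw [← Finset.sum_mul_sum]
      simp only [hA]
      ring
    have hSint : Integrable (fun ω => ∑ t, x k t ω * x l t ω) P :=
      integrable_finset_sum _ fun t _ => hint2 k l t t
    have hDint : Integrable
        (fun ω => ∑ t, ∑ s : Fin n, (x k t ω * x l t ω) * (x k s ω * x l s ω)) P :=
      integrable_finset_sum _ fun t _ => integrable_finset_sum _ fun s _ => hint4 k l t s
    have hsum : ∑ t : Fin n, ∑ s : Fin n, (if t = s then V k l t else δ)
        = ∑ t, V k l t + ((n:ℝ) * (n:ℝ) - n) * δ := by
      have h1 : ∀ t : Fin n, ∑ s : Fin n, (if t = s then V k l t else δ)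
          = V k l t + ((n:ℝ) - 1) * δ := by
        intro t
        have h2 : ∀ s : Fin n, (if t = s then V k l t else δ)
            = δ + (if t = s then V k l t - δ else 0) := by
          intro s; by_cases h : t = s <;> simp [h]
        rw [Finset.sum_congr rfl (fun s _ => h2 s), Finset.sum_add_distrib,
          Finset.sum_const, Finset.sum_ite_eq, Finset.card_univ]
        simp only [Fintype.card_fin, nsmul_eq_mul, Finset.mem_univ, if_pos]
        ring
      rw [Finset.sum_congr rfl (fun t _ => h1 t), Finset.sum_add_distrib, Finset.sum_const,
        Finset.card_univ]
      simp only [Fintype.card_fin, nsmul_eq_mul]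
      ring
    have hD : ∫ ω, (∑ t, ∑ s, (x k t ω * x l t ω) * (x k s ω * x l s ω)) ∂P
        = ∑ t : Fin n, ∑ s : Fin n, (if t = s then V k l t else δ) := by
      rw [integral_finset_sum _ (fun t _ => integrable_finset_sum _ fun s _ => hint4 k l t s)]
      refine Finset.sum_congr rfl fun t _ => ?_
      rw [integral_finset_sum _ (fun s _ => hint4 k l t s)]
      refine Finset.sum_congr rfl fun s _ => ?_
      by_cases h : t = s
      · subst h
        rw [if_pos rfl]
        show _ = ∫ ω, (x k t ω * x l t ω) ^ 2 ∂P
        congr 1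
        funext ω
        ring
      · rw [if_neg h, Ecross k l t s h, hδdef]
    have hS : ∫ ω, (∑ t, x k t ω * x l t ω) ∂P = (n:ℝ) * δ := by
      rw [integral_finset_sum _ (fun t _ => hint2 k l t t)]
      rw [Finset.sum_congr rfl (fun t _ => Emean k l t)]
      rw [Finset.sum_const, Finset.card_univ]
      simp only [Fintype.card_fin, nsmul_eq_mul, hδdef]
    have hf2 : Integrable (fun ω => (2 * (n:ℝ)⁻¹ * δ) * (∑ t, x k t ω * x l t ω)) P :=
      hSint.const_mul _
    have hf3 : Integrable (fun ω =>
        (∑ t, ∑ s, (x k t ω * x l t ω) * (x k s ω * x l s ω)) * ((n:ℝ)⁻¹ * (n:ℝ)⁻¹)) P :=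
      hDint.mul_const _
    have hf1 : Integrable (fun ω =>
        (∑ t, ∑ s, (x k t ω * x l t ω) * (x k s ω * x l s ω)) * ((n:ℝ)⁻¹ * (n:ℝ)⁻¹)
          - (2 * (n:ℝ)⁻¹ * δ) * (∑ t, x k t ω * x l t ω)) P := hf3.sub hf2
    calc ∫ ω, (A k l ω) ^ 2 ∂P
        = ∫ ω, ((∑ t, ∑ s, (x k t ω * x l t ω) * (x k s ω * x l s ω)) * ((n:ℝ)⁻¹ * (n:ℝ)⁻¹)
            - (2 * (n:ℝ)⁻¹ * δ) * (∑ t, x k t ω * x l t ω) + δ * δ) ∂P :=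
          integral_congr_ae (Filter.Eventually.of_forall hpw)
      _ = (∫ ω, (∑ t, ∑ s, (x k t ω * x l t ω) * (x k s ω * x l s ω)) ∂P) * ((n:ℝ)⁻¹ * (n:ℝ)⁻¹)
            - (2 * (n:ℝ)⁻¹ * δ) * (∫ ω, (∑ t, x k t ω * x l t ω) ∂P) + δ * δ := by
          rw [integral_add hf1 (integrable_const _), integral_sub hf3 hf2,
            integral_mul_const, integral_const_mul, integral_const]
          simp
      _ = (∑ t, V k l t + ((n:ℝ) * (n:ℝ) - n) * δ) * ((n:ℝ)⁻¹ * (n:ℝ)⁻¹)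
            - (2 * (n:ℝ)⁻¹ * δ) * ((n:ℝ) * δ) + δ * δ := by rw [hD, hS, hsum]
      _ = (n:ℝ)⁻¹ * (n:ℝ)⁻¹ * (∑ t, V k l t) - (n:ℝ)⁻¹ * δ := by
          linear_combination (1 - 2 * (n:ℝ)⁻¹ * (n:ℝ)) * hδ
            + ((n:ℝ) * (n:ℝ)⁻¹ * δ * ((n:ℝ)⁻¹ * (n:ℝ) + 1) - (n:ℝ)⁻¹ * δ - δ
               - (n:ℝ) * (n:ℝ) * δ * ((n:ℝ)⁻¹ * (n:ℝ)⁻¹)) * hc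
  -- rewrite the goal
  have hfrob : ∀ ω : Ω, frobSq ((n : ℝ)⁻¹ •
        (Matrix.of (fun k t => x k t ω) * Matrix.transpose (Matrix.of (fun k t => x k t ω))) - 1)
      = ∑ k, ∑ l, (A k l ω) ^ 2 := by
    intro ω
    simp only [frobSq, hA, Matrix.sub_apply, Matrix.smul_apply, Matrix.mul_apply,
      Matrix.one_apply, Matrix.transpose_apply, Matrix.of_apply, smul_eq_mul]
  have hgoal : (∫ ω, frobSq ((n : ℝ)⁻¹ •
        (Matrix.of (fun k t => x k t ω) * Matrix.transpose (Matrix.of (fun k t => x k t ω))) - 1) ∂P)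
      = (n:ℝ)⁻¹ * (n:ℝ)⁻¹ * (∑ k, ∑ l, ∑ t, V k l t) - (n:ℝ)⁻¹ * pp := by
    rw [integral_congr_ae (Filter.Eventually.of_forall hfrob)]
    rw [integral_finset_sum _ (fun k _ => integrable_finset_sum _ fun l _ => hIntA k l)]
    rw [Finset.sum_congr rfl (fun k _ => integral_finset_sum _ fun l _ => hIntA k l)]
    rw [Finset.sum_congr rfl (fun k _ => Finset.sum_congr rfl (fun l _ => key k l))]
    rw [Finset.sum_congr rfl (fun k (_ : k ∈ Finset.univ) => Finset.sum_sub_distrib _ _)]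
    rw [Finset.sum_sub_distrib]
    congr 1
    · simp only [Finset.mul_sum]
    · have h1 : ∀ k : Fin pp, ∑ l : Fin pp, (n:ℝ)⁻¹ * (if k = l then (1:ℝ) else 0)
          = (n:ℝ)⁻¹ := by
        intro k; simp
      rw [Finset.sum_congr rfl (fun k _ => h1 k), Finset.sum_const, Finset.card_univ]
      simp [nsmul_eq_mul, mul_comm]
  rw [hgoal]
  set M4 : ℝ := ⨆ kt : Fin pp × Fin n, ∫ ω, (x kt.1 kt.2 ω) ^ 4 ∂P with hM4
  have hVle : ∀ k l t, V k l t ≤ if k = l then M4 else 1 := by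
    intro k l t
    by_cases h : k = l
    · subst h
      rw [if_pos rfl]
      have hVeq : V k k t = ∫ ω, (x k t ω) ^ 4 ∂P := by
        simp only [hV]; congr 1; funext ω; ring
      rw [hVeq, hM4]
      exact le_ciSup (f := fun kt : Fin pp × Fin n => ∫ ω, (x kt.1 kt.2 ω) ^ 4 ∂P)
        (Set.Finite.bddAbove (Set.finite_range _)) (k, t)
    · rw [if_neg h]
      exact le_of_eq (Esq k l t h)
  have hb : ∑ k, ∑ l, ∑ t, V k l t ≤ (pp:ℝ) * n * ((pp:ℝ) + M4 - 1) := by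
    calc ∑ k, ∑ l, ∑ t, V k l t
        ≤ ∑ k : Fin pp, ∑ l : Fin pp, ∑ _t : Fin n, (if k = l then M4 else 1) := by
          gcongr with k _ l _ t _
          exact hVle k l t
      _ = (pp:ℝ) * n * ((pp:ℝ) + M4 - 1) := by
          have h3 : ∀ k : Fin pp, ∑ l : Fin pp, (if k = l then M4 else 1)
              = (pp:ℝ) - 1 + M4 := by
            intro k
            have h2 : ∀ l : Fin pp, (if k = l then M4 else 1)
                = 1 + (if k = l then M4 - 1 else 0) := by
              intro l; by_cases h : k = l <;> simp [h]
            rw [Finset.sum_congr rfl (fun l _ => h2 l), Finset.sum_add_distrib,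
              Finset.sum_const, Finset.sum_ite_eq, Finset.card_univ]
            simp only [Fintype.card_fin, nsmul_eq_mul, Finset.mem_univ, if_pos]
            ring
          simp only [Finset.sum_const, Finset.card_univ, Fintype.card_fin, nsmul_eq_mul]
          rw [Finset.sum_congr rfl (fun k _ => by rw [← Finset.mul_sum, h3 k])]
          rw [Finset.sum_const, Finset.card_univ]
          simp only [Fintype.card_fin, nsmul_eq_mul]
          ring
  calc (n:ℝ)⁻¹ * (n:ℝ)⁻¹ * (∑ k, ∑ l, ∑ t, V k l t) - (n:ℝ)⁻¹ * pp
      ≤ (n:ℝ)⁻¹ * (n:ℝ)⁻¹ * ((pp:ℝ) * n * ((pp:ℝ) + M4 - 1)) - (n:ℝ)⁻¹ * pp := by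
        have := mul_le_mul_of_nonneg_left hb (by positivity : (0:ℝ) ≤ (n:ℝ)⁻¹ * (n:ℝ)⁻¹)
        linarith
    _ = ((pp : ℝ) / n) * ((pp : ℝ) + M4 - 2) := by
        field_simp
        ring

end
end

section
/- Let M = [x_{k,t}] (1 ≤ k ≤ p, 1 ≤ t ≤ n) be a p×n random matrix whose entries are independent centered real random variables in L⁴ with E[x_{k,t}²] = 1 for all k, t, and suppose all the entries have the same fourth moment m₄ = E[x_{k,t}⁴]. Then E[ ‖ (1/n) M Mᵀ − I_p ‖_F² ] = (p/n)·( p + m₄ − 2 ). -/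
open MeasureTheory ProbabilityTheory Filter
open scoped ENNReal NNReal Topology BigOperators

noncomputable section

/-- equality version of the white-noise Frobenius computation, when all entries
share the same fourth moment. -/
theorem white_noise_covariance_frobenius_eq
    (pp n : ℕ) (hp : 0 < pp) (hn : 0 < n)
    (Ω : Type) [MeasurableSpace Ω] (P : Measure Ω) [IsProbabilityMeasure P]
    (x : Fin pp → Fin n → Ω → ℝ)
    (hmeas : ∀ k t, Measurable (x k t))
    (hindep : iIndepFun
      (fun (kt : Fin pp × Fin n) ω => x kt.1 kt.2 ω) P)
    (hL4 : ∀ k t, MemLp (x k t) 4 P)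
    (hcent : ∀ k t, ∫ ω, x k t ω ∂P = 0)
    (hvar : ∀ k t, ∫ ω, (x k t ω) ^ 2 ∂P = 1)
    (m₄ : ℝ) (hm₄ : ∀ k t, ∫ ω, (x k t ω) ^ 4 ∂P = m₄) :
    (∫ ω, frobSq ((n : ℝ)⁻¹ •
        (Matrix.of (fun k t => x k t ω) * Matrix.transpose (Matrix.of (fun k t => x k t ω))) - 1) ∂P)
      = ((pp : ℝ) / n) * ((pp : ℝ) + m₄ - 2) := by
  classical
  have hhalf : (1 : ℝ≥0∞) / 2 = 1 / 4 + 1 / 4 := by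
    rw [ENNReal.div_add_div_same]
    rw [show (4 : ℝ≥0∞) = 2 * 2 by norm_num]
    rw [ENNReal.div_eq_div_iff (by norm_num) (by norm_num) (by norm_num) (by norm_num)]
    ring
  have hone : (1 : ℝ≥0∞) / 1 = 1 / 2 + 1 / 2 := by
    rw [ENNReal.div_add_div_same]
    norm_num
    exact (ENNReal.div_self (by norm_num) (by norm_num)).symm
  have hmeas' : ∀ i : Fin pp × Fin n, Measurable fun ω => x i.1 i.2 ω :=
    fun i => hmeas i.1 i.2
  have hL2 : ∀ k t, MemLp (x k t) 2 P :=
    fun k t => (hL4 k t).mono_exponent (by norm_num)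
  have hInt : ∀ k t, Integrable (x k t) P := fun k t => (hL2 k t).integrable one_le_two
  have hIntSq : ∀ k t, Integrable (fun ω => x k t ω ^ 2) P := fun k t => (hL2 k t).integrable_sq
  have hY2 : ∀ (k l : Fin pp) (t : Fin n), MemLp (fun ω => x k t ω * x l t ω) 2 P := by
    intro k l t
    have h := MemLp.smul (hL4 l t) (hL4 k t) (p := 4) (q := 4) (r := 2) (hpqr := ⟨by simpa [one_div] using hhalf.symm⟩)
    exact h
  have hYInt : ∀ (k l : Fin pp) (t : Fin n), Integrable (fun ω => x k t ω * x l t ω) P :=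
    fun k l t => (hY2 k l t).integrable one_le_two
  have hYYInt : ∀ (k l : Fin pp) (t s : Fin n),
      Integrable (fun ω => (x k t ω * x l t ω) * (x k s ω * x l s ω)) P := by
    intro k l t s
    rw [← memLp_one_iff_integrable]
    have h := MemLp.smul (hY2 k l s) (hY2 k l t) (p := 2) (q := 2) (r := 1) (hpqr := ⟨by simpa [one_div] using hone.symm⟩)
    exact h
  -- expectation of a product of two distinct entries is zero
  have hE0 : ∀ (k l : Fin pp) (t s : Fin n), (k, t) ≠ (l, s) →
      ∫ ω, x k t ω * x l s ω ∂P = 0 := by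
    intro k l t s hne
    have hind : IndepFun (x k t) (x l s) P := hindep.indepFun hne
    have h : ∫ ω, x k t ω * x l s ω ∂P
        = (∫ ω, x k t ω ∂P) * ∫ ω, x l s ω ∂P :=
      hind.integral_mul_eq_mul_integral (hInt k t).aestronglyMeasurable (hInt l s).aestronglyMeasurable
    rw [h, hcent k t, zero_mul]
  -- expectation of a product of squares of two distinct entries is one
  have hEsq : ∀ (k l : Fin pp) (t s : Fin n), (k, t) ≠ (l, s) →
      ∫ ω, x k t ω ^ 2 * x l s ω ^ 2 ∂P = 1 := by
    intro k l t s hne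
    have hind : IndepFun (fun ω => x k t ω ^ 2) (fun ω => x l s ω ^ 2) P := by
      have h := (hindep.indepFun hne).comp (φ := fun y : ℝ => y ^ 2) (ψ := fun y : ℝ => y ^ 2)
        (measurable_id.pow_const 2) (measurable_id.pow_const 2)
      exact h
    have h : ∫ ω, x k t ω ^ 2 * x l s ω ^ 2 ∂P
        = (∫ ω, x k t ω ^ 2 ∂P) * ∫ ω, x l s ω ^ 2 ∂P :=
      hind.integral_mul_eq_mul_integral (hIntSq k t).aestronglyMeasurable (hIntSq l s).aestronglyMeasurable
    rw [h, hvar k t, hvar l s, one_mul]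
  -- fully off-diagonal fourth order terms vanish
  have hE4zero : ∀ (k l : Fin pp) (t s : Fin n), k ≠ l → t ≠ s →
      ∫ ω, (x k t ω * x l t ω) * (x k s ω * x l s ω) ∂P = 0 := by
    intro k l t s hkl hts
    have hind := hindep.indepFun_mul_mul hmeas' (k, t) (l, t) (k, s) (l, s)
      (by simp [Prod.ext_iff, hts]) (by simp [Prod.ext_iff, hkl])
      (by simp [Prod.ext_iff, hkl.symm]) (by simp [Prod.ext_iff, hts])
    have h : ∫ ω, (x k t ω * x l t ω) * (x k s ω * x l s ω) ∂P
        = (∫ ω, x k t ω * x l t ω ∂P) * ∫ ω, x k s ω * x l s ω ∂P :=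
      hind.integral_mul_eq_mul_integral (hYInt k l t).aestronglyMeasurable (hYInt k l s).aestronglyMeasurable
    have h0 : ∫ ω, x k t ω * x l t ω ∂P = 0 := hE0 k l t t (by simp [Prod.ext_iff, hkl])
    rw [h, h0, zero_mul]
  -- first moment of the inner sums
  have hS1 : ∀ k l : Fin pp,
      ∫ ω, (∑ t, x k t ω * x l t ω) ∂P = if k = l then (n : ℝ) else 0 := by
    intro k l
    rw [integral_finset_sum _ (fun t _ => hYInt k l t)]
    by_cases hkl : k = l
    · subst hkl
      have hh : ∀ t : Fin n, ∫ ω, x k t ω * x k t ω ∂P = 1 := by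
        intro t
        have := hvar k t
        simpa [sq] using this
      simp [hh]
    · have hh : ∀ t : Fin n, ∫ ω, x k t ω * x l t ω ∂P = 0 :=
        fun t => hE0 k l t t (by simp [Prod.ext_iff, hkl])
      simp [hh, hkl]
  -- second moment of the inner sums
  have hSsq : ∀ k l : Fin pp,
      ∫ ω, (∑ t, x k t ω * x l t ω) ^ 2 ∂P
        = if k = l then (n : ℝ) * m₄ + n * (n - 1) else n := by
    intro k l
    have expand : ∀ ω : Ω, (∑ t, x k t ω * x l t ω) ^ 2
        = ∑ t, ∑ s, (x k t ω * x l t ω) * (x k s ω * x l s ω) := by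
      intro ω; rw [sq, Finset.sum_mul_sum]
    simp_rw [expand]
    rw [integral_finset_sum _ (fun t _ =>
      integrable_finset_sum _ (fun s _ => hYYInt k l t s))]
    have swap : ∀ t : Fin n,
        ∫ ω, (∑ s, (x k t ω * x l t ω) * (x k s ω * x l s ω)) ∂P
          = ∑ s, ∫ ω, (x k t ω * x l t ω) * (x k s ω * x l s ω) ∂P :=
      fun t => integral_finset_sum _ (fun s _ => hYYInt k l t s)
    simp_rw [swap]
    by_cases hkl : k = l
    · subst hkl
      have hterm : ∀ t s : Fin n,
          ∫ ω, (x k t ω * x k t ω) * (x k s ω * x k s ω) ∂P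
            = if t = s then m₄ else 1 := by
        intro t s
        by_cases hts : t = s
        · subst hts
          have h4 := hm₄ k t
          have heq : (fun ω => (x k t ω * x k t ω) * (x k t ω * x k t ω))
              = fun ω => x k t ω ^ 4 := by funext ω; ring
          rw [heq, h4, if_pos rfl]
        · have h := hEsq k k t s (by simp [Prod.ext_iff, hts])
          have heq : (fun ω => (x k t ω * x k t ω) * (x k s ω * x k s ω))
              = fun ω => x k t ω ^ 2 * x k s ω ^ 2 := by funext ω; ring
          rw [heq, h, if_neg hts]
      simp_rw [hterm]
      have hrow : ∀ t : Fin n, (∑ s, if t = s then m₄ else (1:ℝ)) = m₄ + ((n:ℝ) - 1) := by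
        intro t
        have heq : (∑ s, if t = s then m₄ else (1:ℝ))
            = ∑ s : Fin n, ((if t = s then m₄ - 1 else 0) + 1) := by
          apply Finset.sum_congr rfl; intro s _; by_cases h : t = s <;> simp [h]
        rw [heq, Finset.sum_add_distrib, Finset.sum_ite_eq]
        simp
        try ring
      simp_rw [hrow]
      simp
      try ring
    · have hterm : ∀ t s : Fin n,
          ∫ ω, (x k t ω * x l t ω) * (x k s ω * x l s ω) ∂P
            = if t = s then 1 else 0 := by
        intro t s
        by_cases hts : t = s
        · subst hts
          have h := hEsq k l t t (by simp [Prod.ext_iff, hkl])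
          have heq : (fun ω => (x k t ω * x l t ω) * (x k t ω * x l t ω))
              = fun ω => x k t ω ^ 2 * x l t ω ^ 2 := by funext ω; ring
          rw [heq, h, if_pos rfl]
        · rw [hE4zero k l t s hkl hts, if_neg hts]
      simp_rw [hterm]
      simp [hkl]
  -- membership of the inner sums in L²
  have hSmem : ∀ k l : Fin pp, MemLp (fun ω => ∑ t, x k t ω * x l t ω) 2 P :=
    fun k l => memLp_finset_sum _ (fun t _ => hY2 k l t)
  have hnR : (0:ℝ) < (n:ℝ) := by exact_mod_cast hn
  -- the per-entry expectation
  have key : ∀ k l : Fin pp,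
      ∫ ω, ((n : ℝ)⁻¹ * (∑ t, x k t ω * x l t ω) - (if k = l then 1 else 0)) ^ 2 ∂P
        = if k = l then (m₄ - 1) / n else 1 / n := by
    intro k l
    have hSInt : Integrable (fun ω => ∑ t, x k t ω * x l t ω) P :=
      (hSmem k l).integrable one_le_two
    have hSsqInt : Integrable (fun ω => (∑ t, x k t ω * x l t ω) ^ 2) P :=
      (hSmem k l).integrable_sq
    have hexp : ∀ ω : Ω,
        ((n : ℝ)⁻¹ * (∑ t, x k t ω * x l t ω) - (if k = l then (1:ℝ) else 0)) ^ 2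
          = ((n:ℝ)⁻¹)^2 * (∑ t, x k t ω * x l t ω) ^ 2
            - (2 * (n:ℝ)⁻¹ * (if k = l then (1:ℝ) else 0)) * (∑ t, x k t ω * x l t ω)
            + (if k = l then (1:ℝ) else 0) ^ 2 := by
      intro ω; ring
    simp_rw [hexp]
    have h1 : Integrable (fun ω =>
        ((n:ℝ)⁻¹)^2 * (∑ t, x k t ω * x l t ω) ^ 2
          - (2 * (n:ℝ)⁻¹ * (if k = l then (1:ℝ) else 0)) * (∑ t, x k t ω * x l t ω)) P :=
      (hSsqInt.const_mul _).sub (hSInt.const_mul _)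
    have hadd : ∫ ω, (((n:ℝ)⁻¹)^2 * (∑ t, x k t ω * x l t ω) ^ 2
          - (2 * (n:ℝ)⁻¹ * (if k = l then (1:ℝ) else 0)) * (∑ t, x k t ω * x l t ω)
          + (if k = l then (1:ℝ) else 0) ^ 2) ∂P
        = (∫ ω, (((n:ℝ)⁻¹)^2 * (∑ t, x k t ω * x l t ω) ^ 2
            - (2 * (n:ℝ)⁻¹ * (if k = l then (1:ℝ) else 0)) * (∑ t, x k t ω * x l t ω)) ∂P)
          + ∫ _ω, ((if k = l then (1:ℝ) else 0) ^ 2) ∂P :=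
      integral_add h1 (integrable_const _)
    have hsub : ∫ ω, (((n:ℝ)⁻¹)^2 * (∑ t, x k t ω * x l t ω) ^ 2
          - (2 * (n:ℝ)⁻¹ * (if k = l then (1:ℝ) else 0)) * (∑ t, x k t ω * x l t ω)) ∂P
        = (∫ ω, ((n:ℝ)⁻¹)^2 * (∑ t, x k t ω * x l t ω) ^ 2 ∂P)
          - ∫ ω, (2 * (n:ℝ)⁻¹ * (if k = l then (1:ℝ) else 0)) * (∑ t, x k t ω * x l t ω) ∂P :=
      integral_sub (hSsqInt.const_mul _) (hSInt.const_mul _)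
    have hc1 : ∫ ω, ((n:ℝ)⁻¹)^2 * (∑ t, x k t ω * x l t ω) ^ 2 ∂P
        = ((n:ℝ)⁻¹)^2 * ∫ ω, (∑ t, x k t ω * x l t ω) ^ 2 ∂P := integral_const_mul _ _
    have hc2 : ∫ ω, (2 * (n:ℝ)⁻¹ * (if k = l then (1:ℝ) else 0)) * (∑ t, x k t ω * x l t ω) ∂P
        = (2 * (n:ℝ)⁻¹ * (if k = l then (1:ℝ) else 0)) * ∫ ω, (∑ t, x k t ω * x l t ω) ∂P :=
      integral_const_mul _ _
    have hconst : ∫ _ω, ((if k = l then (1:ℝ) else 0) ^ 2) ∂P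
        = (if k = l then (1:ℝ) else 0) ^ 2 := by simp
    rw [hadd, hsub, hc1, hc2, hconst, hSsq k l, hS1 k l]
    by_cases hkl : k = l
    · simp only [if_pos hkl]
      field_simp
      ring
    · simp only [if_neg hkl]
      field_simp
      try ring
  -- rewrite the Frobenius norm pointwise
  have hfrob : ∀ ω : Ω,
      frobSq ((n : ℝ)⁻¹ •
          (Matrix.of (fun k t => x k t ω) * Matrix.transpose (Matrix.of (fun k t => x k t ω))) - 1)
        = ∑ k, ∑ l, ((n : ℝ)⁻¹ * (∑ t, x k t ω * x l t ω) - (if k = l then 1 else 0)) ^ 2 := by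
    intro ω
    simp [frobSq, Matrix.sub_apply, Matrix.smul_apply, Matrix.mul_apply, Matrix.one_apply,
      Matrix.transpose_apply, Matrix.of_apply, smul_eq_mul]
  simp_rw [hfrob]
  have hEntInt : ∀ k l : Fin pp,
      Integrable (fun ω =>
        ((n : ℝ)⁻¹ * (∑ t, x k t ω * x l t ω) - (if k = l then 1 else 0)) ^ 2) P := by
    intro k l
    have hmem : MemLp (fun ω =>
        (n : ℝ)⁻¹ * (∑ t, x k t ω * x l t ω) - (if k = l then 1 else 0)) 2 P :=
      ((hSmem k l).const_mul _).sub (memLp_const _)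
    exact hmem.integrable_sq
  rw [integral_finset_sum _ (fun k _ => integrable_finset_sum _ (fun l _ => hEntInt k l))]
  have hswap : ∀ k : Fin pp,
      ∫ ω, (∑ l, ((n : ℝ)⁻¹ * (∑ t, x k t ω * x l t ω) - (if k = l then 1 else 0)) ^ 2) ∂P
        = ∑ l, ∫ ω, ((n : ℝ)⁻¹ * (∑ t, x k t ω * x l t ω) - (if k = l then 1 else 0)) ^ 2 ∂P :=
    fun k => integral_finset_sum _ (fun l _ => hEntInt k l)
  simp_rw [hswap, key]
  have hrw : ∀ k : Fin pp, (∑ l : Fin pp, if k = l then (m₄ - 1) / n else 1 / n)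
      = (m₄ - 1) / n + ((pp : ℝ) - 1) * (1 / n) := by
    intro k
    have heq : (∑ l : Fin pp, if k = l then (m₄ - 1) / n else 1 / n)
        = ∑ l : Fin pp, ((if k = l then (m₄ - 1) / n - 1 / n else 0) + 1 / n) := by
      apply Finset.sum_congr rfl; intro l _; by_cases h : k = l <;> simp [h]
    rw [heq, Finset.sum_add_distrib, Finset.sum_ite_eq]
    simp
    try ring
  simp_rw [hrw]
  simp
  field_simp
  ring

end
end

section
/- Let d ≥ 2, let S be a measurable space, let X₁,…,X_d be i.i.d. S-valued random variables, and let φ : S^d → ℝ be an antisymmetric measurable function with φ(X₁,…,X_d) integrable. Set φ̄(x) = E[φ(x, X₂, …, X_d)]. Then the conditional expectations satisfy: E[ φ(X₁,…,X_d) | X₁ ] = φ̄(X₁) almost surely, and for every l ∈ {2,…,d}, E[ φ(X₁,…,X_d) | X_l ] = −φ̄(X_l) almost surely. Consequently E[φ(X₁,…,X_d)] = E[φ̄(X₁)] = 0. -/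
open MeasureTheory ProbabilityTheory Filter
open scoped ENNReal NNReal Topology BigOperators

noncomputable section

section AuxAnti

variable {S : Type} [mS : MeasurableSpace S] {d : ℕ}

lemma measurable_comp_perm (σ : Equiv.Perm (Fin d)) :
    Measurable fun y : Fin d → S => y ∘ σ :=
  measurable_pi_lambda _ fun j => measurable_pi_apply _

lemma pi_map_comp_perm (μ : Measure S) [IsProbabilityMeasure μ] (σ : Equiv.Perm (Fin d)) :
    (Measure.pi fun _ : Fin d => μ).map (fun y => y ∘ σ) = Measure.pi fun _ : Fin d => μ := by
  refine (Measure.pi_eq fun s hs => ?_).symm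
  rw [Measure.map_apply (measurable_comp_perm σ) (MeasurableSet.univ_pi hs)]
  have hpre : (fun y : Fin d → S => y ∘ σ) ⁻¹' Set.pi Set.univ s
      = Set.pi Set.univ fun j => s (σ.symm j) := by
    ext y
    simp only [Set.mem_preimage, Set.mem_pi, Set.mem_univ, forall_true_left, Function.comp]
    constructor
    · intro h j; simpa using h (σ.symm j)
    · intro h j; simpa using h (σ j)
  rw [hpre, Measure.pi_pi]
  exact Equiv.prod_comp σ.symm fun j => μ (s j)

def insert0 {S : Type} {d : ℕ} (p : S × (Fin d → S)) : Fin d → S :=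
  fun j => if (j : ℕ) = 0 then p.1 else p.2 j

lemma measurable_insert0 : Measurable (insert0 (S := S) (d := d)) := by
  refine measurable_pi_lambda _ fun j => ?_
  unfold insert0
  by_cases h : (j : ℕ) = 0
  · simp only [h, if_true]; exact measurable_fst
  · simp only [h, if_false]; exact measurable_snd.eval

lemma prod_map_insert0 (hd : 0 < d) (μ : Measure S) [IsProbabilityMeasure μ] :
    ((μ.prod (Measure.pi fun _ : Fin d => μ)).map insert0) = Measure.pi fun _ : Fin d => μ := by
  refine (Measure.pi_eq fun s hs => ?_).symm
  set z : Fin d := ⟨0, hd⟩ with hz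
  rw [Measure.map_apply measurable_insert0 (MeasurableSet.univ_pi hs)]
  have hpre : insert0 ⁻¹' Set.pi Set.univ s
      = s z ×ˢ Set.pi Set.univ (fun j : Fin d => if (j : ℕ) = 0 then Set.univ else s j) := by
    ext p
    simp only [Set.mem_preimage, Set.mem_pi, Set.mem_univ, forall_true_left, Set.mem_prod, insert0]
    constructor
    · intro h
      refine ⟨by simpa [hz] using h z, fun j => ?_⟩
      by_cases hj : (j : ℕ) = 0
      · simp [hj]
      · simpa [hj] using h j
    · rintro ⟨h1, h2⟩ j
      by_cases hj : (j : ℕ) = 0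
      · have hjz : j = z := Fin.ext hj
        rw [if_pos hj, hjz]; exact h1
      · simpa [hj] using h2 j
  rw [hpre, Measure.prod_prod, Measure.pi_pi]
  have hcongr : ∀ j : Fin d, μ (if (j : ℕ) = 0 then Set.univ else s j)
      = Function.update (fun j : Fin d => μ (s j)) z 1 j := by
    intro j
    by_cases hj : (j : ℕ) = 0
    · have hjz : j = z := Fin.ext hj
      rw [hj, if_pos rfl, hjz, Function.update_self, measure_univ]
    · have hjz : j ≠ z := fun h => hj (by rw [h])
      simp [hj, Function.update_of_ne hjz]
  rw [Finset.prod_congr rfl (fun j _ => hcongr j),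
    Finset.prod_update_of_mem (Finset.mem_univ z), one_mul]
  rw [← Finset.mul_prod_erase Finset.univ (fun j => μ (s j)) (Finset.mem_univ z),
    Finset.sdiff_singleton_eq_erase]

lemma stronglyMeasurable_phiBar (μ : Measure S) [IsProbabilityMeasure μ]
    (φ : (Fin d → S) → ℝ) (hφmeas : Measurable φ) :
    StronglyMeasurable (phiBar φ μ) := by
  have h : StronglyMeasurable fun p : S × (Fin d → S) => φ (insert0 p) :=
    (hφmeas.comp measurable_insert0).stronglyMeasurable
  exact h.integral_prod_right'

lemma integrable_comp_insert0 (hd : 0 < d) (μ : Measure S) [IsProbabilityMeasure μ]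
    (φ : (Fin d → S) → ℝ) (hφmeas : Measurable φ)
    (hφint : Integrable φ (Measure.pi fun _ : Fin d => μ)) :
    Integrable (fun p : S × (Fin d → S) => φ (insert0 p))
      (μ.prod (Measure.pi fun _ : Fin d => μ)) := by
  rw [← prod_map_insert0 hd μ] at hφint
  exact (integrable_map_measure hφmeas.aestronglyMeasurable
    measurable_insert0.aemeasurable).mp hφint

lemma integrable_phiBar (hd : 0 < d) (μ : Measure S) [IsProbabilityMeasure μ]
    (φ : (Fin d → S) → ℝ) (hφmeas : Measurable φ)
    (hφint : Integrable φ (Measure.pi fun _ : Fin d => μ)) :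
    Integrable (phiBar φ μ) μ :=
  (integrable_comp_insert0 hd μ φ hφmeas hφint).integral_prod_left

lemma key_eval0 (hd : 0 < d) (μ : Measure S) [IsProbabilityMeasure μ]
    (φ : (Fin d → S) → ℝ) (hφmeas : Measurable φ)
    (hφint : Integrable φ (Measure.pi fun _ : Fin d => μ))
    {B : Set S} (hB : MeasurableSet B) :
    ∫ y in (fun y : Fin d → S => y ⟨0, hd⟩) ⁻¹' B, φ y ∂(Measure.pi fun _ : Fin d => μ)
      = ∫ x in B, phiBar φ μ x ∂μ := by
  set ν := (Measure.pi fun _ : Fin d => μ) with hν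
  have hmapT : (μ.prod ν).map insert0 = ν := prod_map_insert0 hd μ
  have hpreB : insert0 ⁻¹' ((fun y : Fin d → S => y ⟨0, hd⟩) ⁻¹' B)
      = B ×ˢ (Set.univ : Set (Fin d → S)) := by
    ext p
    simp [insert0]
  calc ∫ y in (fun y : Fin d → S => y ⟨0, hd⟩) ⁻¹' B, φ y ∂ν
      = ∫ y in (fun y : Fin d → S => y ⟨0, hd⟩) ⁻¹' B, φ y ∂((μ.prod ν).map insert0) := by
        rw [hmapT]
    _ = ∫ p in insert0 ⁻¹' ((fun y : Fin d → S => y ⟨0, hd⟩) ⁻¹' B), φ (insert0 p)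
          ∂(μ.prod ν) := by
        refine setIntegral_map (hB.preimage (measurable_pi_apply _)) ?_
          measurable_insert0.aemeasurable
        rw [hmapT]; exact hφmeas.aestronglyMeasurable
    _ = ∫ p in B ×ˢ (Set.univ : Set (Fin d → S)), φ (insert0 p) ∂(μ.prod ν) := by rw [hpreB]
    _ = ∫ x in B, ∫ y in Set.univ, φ (insert0 (x, y)) ∂ν ∂μ :=
        setIntegral_prod _ (integrable_comp_insert0 hd μ φ hφmeas hφint).integrableOn
    _ = ∫ x in B, phiBar φ μ x ∂μ := by
        simp only [Measure.restrict_univ]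
        rfl

lemma key_swap (hd : 0 < d) (μ : Measure S) [IsProbabilityMeasure μ]
    (φ : (Fin d → S) → ℝ) (hφanti : Antisymmetric' φ) (hφmeas : Measurable φ)
    (l : Fin d) (hl : (l : ℕ) ≠ 0) {B : Set S} (hB : MeasurableSet B) :
    ∫ y in (fun y : Fin d → S => y l) ⁻¹' B, φ y ∂(Measure.pi fun _ : Fin d => μ)
      = - ∫ y in (fun y : Fin d → S => y ⟨0, hd⟩) ⁻¹' B, φ y
          ∂(Measure.pi fun _ : Fin d => μ) := by
  set ν := (Measure.pi fun _ : Fin d => μ) with hν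
  set z : Fin d := ⟨0, hd⟩ with hz
  have hzl : z ≠ l := fun h => hl (by rw [← h])
  set σ : Equiv.Perm (Fin d) := Equiv.swap z l with hσ
  have hmap : ν.map (fun y => y ∘ σ) = ν := pi_map_comp_perm μ σ
  have hpre : (fun y : Fin d → S => y ∘ σ) ⁻¹' ((fun y : Fin d → S => y l) ⁻¹' B)
      = (fun y : Fin d → S => y z) ⁻¹' B := by
    ext y
    simp [hσ, Function.comp, Equiv.swap_apply_right]
  calc ∫ y in (fun y : Fin d → S => y l) ⁻¹' B, φ y ∂ν
      = ∫ y in (fun y : Fin d → S => y l) ⁻¹' B, φ y ∂(ν.map fun y => y ∘ σ) := by rw [hmap]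
    _ = ∫ y in (fun y : Fin d → S => y ∘ σ) ⁻¹' ((fun y : Fin d → S => y l) ⁻¹' B),
          φ (y ∘ σ) ∂ν := by
        refine setIntegral_map (hB.preimage (measurable_pi_apply _)) ?_
          (measurable_comp_perm σ).aemeasurable
        rw [hmap]; exact hφmeas.aestronglyMeasurable
    _ = ∫ y in (fun y : Fin d → S => y z) ⁻¹' B, φ (y ∘ σ) ∂ν := by rw [hpre]
    _ = ∫ y in (fun y : Fin d → S => y z) ⁻¹' B, -φ y ∂ν := by
        refine setIntegral_congr_fun (hB.preimage (measurable_pi_apply _)) fun y _ => ?_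
        rw [hφanti y σ, hσ, Equiv.Perm.sign_swap hzl]
        norm_num
    _ = - ∫ y in (fun y : Fin d → S => y z) ⁻¹' B, φ y ∂ν := integral_neg _

lemma integral_phi_pi_zero (hd : 2 ≤ d) (μ : Measure S) [IsProbabilityMeasure μ]
    (φ : (Fin d → S) → ℝ) (hφanti : Antisymmetric' φ) (hφmeas : Measurable φ) :
    ∫ y, φ y ∂(Measure.pi fun _ : Fin d => μ) = 0 := by
  set ν := (Measure.pi fun _ : Fin d => μ) with hν
  have h0 : (0 : ℕ) < d := by omega
  have h1 : (1 : ℕ) < d := by omega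
  set z : Fin d := ⟨0, h0⟩ with hz
  set o : Fin d := ⟨1, h1⟩ with ho
  have hzo : z ≠ o := by simp [hz, ho, Fin.ext_iff]
  set σ : Equiv.Perm (Fin d) := Equiv.swap z o with hσ
  have hmap : ν.map (fun y => y ∘ σ) = ν := pi_map_comp_perm μ σ
  have heq : ∫ y, φ y ∂ν = ∫ y, φ (y ∘ σ) ∂ν := by
    conv_lhs => rw [← hmap]
    exact integral_map (measurable_comp_perm σ).aemeasurable
      (by rw [hmap]; exact hφmeas.aestronglyMeasurable)
  have hneg : ∀ y : Fin d → S, φ (y ∘ σ) = -φ y := by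
    intro y
    rw [hφanti y σ, hσ, Equiv.Perm.sign_swap hzo]
    norm_num
  simp only [hneg, integral_neg] at heq
  linarith

end AuxAnti

/-- conditional expectations of `φ(X₁, …, X_d)` given one coordinate. -/
theorem condexp_phi_eq_phiBar
    (d : ℕ) (hd : 2 ≤ d)
    (S : Type) [mS : MeasurableSpace S]
    (Ω : Type) [mΩ : MeasurableSpace Ω] (P : Measure Ω) [IsProbabilityMeasure P]
    (X : Fin d → Ω → S) (hXmeas : ∀ i, Measurable (X i))
    (μ : Measure S) [IsProbabilityMeasure μ]
    (hlaw : ∀ i, Measure.map (X i) P = μ)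
    (hindep : iIndepFun X P)
    (φ : (Fin d → S) → ℝ) (hφanti : Antisymmetric' φ) (hφmeas : Measurable φ)
    (hint : Integrable (fun ω => φ (fun j => X j ω)) P) :
    (∀ l : Fin d, (l : ℕ) = 0 →
      P[(fun ω => φ (fun j => X j ω)) | MeasurableSpace.comap (X l) mS]
        =ᵐ[P] fun ω => phiBar φ μ (X l ω)) ∧
    (∀ l : Fin d, (l : ℕ) ≠ 0 →
      P[(fun ω => φ (fun j => X j ω)) | MeasurableSpace.comap (X l) mS]
        =ᵐ[P] fun ω => -phiBar φ μ (X l ω)) ∧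
    (∫ ω, φ (fun j => X j ω) ∂P = 0) ∧ (∫ s, phiBar φ μ s ∂μ = 0) := by
  have h0 : (0 : ℕ) < d := by omega
  set ν := (Measure.pi fun _ : Fin d => μ) with hν
  have hXvec : Measurable fun ω (j : Fin d) => X j ω :=
    measurable_pi_lambda _ fun j => hXmeas j
  -- joint law
  have hjoint : Measure.map (fun ω (j : Fin d) => X j ω) P = ν := by
    refine (Measure.pi_eq fun s hs => ?_).symm
    rw [Measure.map_apply hXvec (MeasurableSet.univ_pi hs)]
    have hpre : (fun ω (j : Fin d) => X j ω) ⁻¹' Set.pi Set.univ s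
        = ⋂ j, ⋂ (_ : j ∈ Finset.univ), X j ⁻¹' s j := by
      ext ω; simp [Set.mem_pi]
    rw [hpre, hindep.measure_inter_preimage_eq_mul Finset.univ (fun i _ => hs i)]
    exact Finset.prod_congr rfl fun j _ => by
      rw [← hlaw j, Measure.map_apply (hXmeas j) (hs j)]
  -- integrability of φ w.r.t. ν
  have hφν : Integrable φ ν := by
    rw [← hjoint]
    exact (integrable_map_measure (by rw [hjoint]; exact hφmeas.aestronglyMeasurable)
      hXvec.aemeasurable).mpr hint
  -- ∫ φ dν = 0
  have hzero : ∫ y, φ y ∂ν = 0 := integral_phi_pi_zero hd μ φ hφanti hφmeas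
  -- transfer of set integrals
  have hXl_set : ∀ (l : Fin d) (B : Set S), MeasurableSet B →
      ∫ ω in X l ⁻¹' B, φ (fun j => X j ω) ∂P
        = ∫ y in (fun y : Fin d → S => y l) ⁻¹' B, φ y ∂ν := by
    intro l B hB
    have h := setIntegral_map (μ := P) (g := fun ω (j : Fin d) => X j ω) (f := φ)
      (s := (fun y : Fin d → S => y l) ⁻¹' B) (hB.preimage (measurable_pi_apply l))
      (by rw [hjoint]; exact hφmeas.aestronglyMeasurable) hXvec.aemeasurable
    rw [hjoint] at h
    exact h.symm
  have hphiBar_sm : StronglyMeasurable (phiBar φ μ) := stronglyMeasurable_phiBar μ φ hφmeas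
  have hphiBar_int : Integrable (phiBar φ μ) μ := integrable_phiBar h0 μ φ hφmeas hφν
  have hphiBarP : ∀ l : Fin d, Integrable (fun ω => phiBar φ μ (X l ω)) P := by
    intro l
    have h : Integrable (phiBar φ μ) (Measure.map (X l) P) := by
      rw [hlaw l]; exact hphiBar_int
    exact (integrable_map_measure hphiBar_sm.aestronglyMeasurable
      (hXmeas l).aemeasurable).mp h
  have hphi_set : ∀ (l : Fin d) (B : Set S), MeasurableSet B →
      ∫ ω in X l ⁻¹' B, phiBar φ μ (X l ω) ∂P = ∫ x in B, phiBar φ μ x ∂μ := by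
    intro l B hB
    have h := setIntegral_map (μ := P) (g := X l) (f := phiBar φ μ) (s := B) hB
      hphiBar_sm.aestronglyMeasurable (hXmeas l).aemeasurable
    rw [hlaw l] at h
    exact h.symm
  -- the common conditional expectation argument
  have hcond : ∀ (l : Fin d) (ε : ℝ),
      (∀ B : Set S, MeasurableSet B →
        ∫ y in (fun y : Fin d → S => y l) ⁻¹' B, φ y ∂ν = ε * ∫ x in B, phiBar φ μ x ∂μ) →
      P[(fun ω => φ (fun j => X j ω)) | MeasurableSpace.comap (X l) mS]
        =ᵐ[P] fun ω => ε * phiBar φ μ (X l ω) := by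
    intro l ε hkey
    have hm : MeasurableSpace.comap (X l) mS ≤ mΩ := (hXmeas l).comap_le
    refine (ae_eq_condExp_of_forall_setIntegral_eq hm hint ?_ ?_ ?_).symm
    · intro s _ _
      exact ((hphiBarP l).const_mul ε).integrableOn
    · rintro s ⟨B, hB, rfl⟩ _
      rw [hXl_set l B hB, hkey B hB, ← hphi_set l B hB, ← integral_const_mul]
    · have hXlm : Measurable[MeasurableSpace.comap (X l) mS] (X l) :=
        fun s hs => ⟨s, hs, rfl⟩
      exact StronglyMeasurable.aestronglyMeasurable
        ((hphiBar_sm.comp_measurable hXlm).const_mul ε)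
  have hint0 : ∫ ω, φ (fun j => X j ω) ∂P = 0 := by
    rw [← hzero, ← hjoint]
    exact (integral_map hXvec.aemeasurable
      (by rw [hjoint]; exact hφmeas.aestronglyMeasurable)).symm
  have hbar0 : ∫ x, phiBar φ μ x ∂μ = 0 := by
    have h := key_eval0 h0 μ φ hφmeas hφν (MeasurableSet.univ)
    simp only [Set.preimage_univ, Measure.restrict_univ] at h
    rw [← h, hzero]
  refine ⟨?_, ?_, hint0, hbar0⟩
  · intro l hl
    have hlz : l = ⟨0, h0⟩ := Fin.ext hl
    have hkey : ∀ B : Set S, MeasurableSet B →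
        ∫ y in (fun y : Fin d → S => y l) ⁻¹' B, φ y ∂ν
          = (1 : ℝ) * ∫ x in B, phiBar φ μ x ∂μ := by
      intro B hB
      rw [one_mul, hlz]
      exact key_eval0 h0 μ φ hφmeas hφν hB
    exact (hcond l 1 hkey).trans (Filter.EventuallyEq.of_eq (by funext ω; ring))
  · intro l hl
    have hkey : ∀ B : Set S, MeasurableSet B →
        ∫ y in (fun y : Fin d → S => y l) ⁻¹' B, φ y ∂ν
          = (-1 : ℝ) * ∫ x in B, phiBar φ μ x ∂μ := by
      intro B hB
      rw [key_swap h0 μ φ hφanti hφmeas l hl hB, key_eval0 h0 μ φ hφmeas hφν hB]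
      ring
    exact (hcond l (-1) hkey).trans (Filter.EventuallyEq.of_eq (by funext ω; ring))


end
end
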